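/- arXiv:1005.1311 — 5 statements merged into one kernel-verified Lean document; each statement's English description precedes it below -/
import Mathlib

section
/- Let $0 < p < 1$, $c > 0$, $k \geq 0$ and $m > 0$ be real numbers. Let $T = \frac{c}{2}\left(p^{k+1} + p^{k+m+1}\right)$ be the target guess when a $k$-player (guessing $c p^k$) and a $(k+m)$-player (guessing $c p^{k+m}$) play head to head. Then the $(k+m)$-player's guess is strictly closer to the target: $|c p^{k+m} - T| < |c p^k - T|$. -/
/-- In the two-player p-beauty game, with target
`T = c/2 * (p^(k+1) + p^(k+m+1))`, the `(k+m)`-player's guess `c * p^(k+m)`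
is strictly closer to the target than the `k`-player's guess `c * p^k`. -/
theorem beauty_head_to_head (p c k m : ℝ) (hp0 : 0 < p) (hp1 : p < 1)
    (hc : 0 < c) (hk : 0 ≤ k) (hm : 0 < m) :
    |c * p ^ (k + m) - c / 2 * (p ^ (k + 1) + p ^ (k + m + 1))| <
      |c * p ^ k - c / 2 * (p ^ (k + 1) + p ^ (k + m + 1))| := by
  have ha : (0:ℝ) < p ^ k := Real.rpow_pos_of_pos hp0 k
  have hb : (0:ℝ) < p ^ (k + m) := Real.rpow_pos_of_pos hp0 (k + m)
  have hba : p ^ (k + m) < p ^ k :=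
    Real.rpow_lt_rpow_of_exponent_gt hp0 hp1 (by linarith)
  have h1 : p ^ (k + 1) = p ^ k * p := by
    rw [Real.rpow_add hp0, Real.rpow_one]
  have h2 : p ^ (k + m + 1) = p ^ (k + m) * p := by
    rw [Real.rpow_add hp0, Real.rpow_one]
  rw [h1, h2]
  rw [abs_lt]
  have key : 0 < c * p ^ k - c / 2 * (p ^ k * p + p ^ (k + m) * p) := by
    nlinarith [mul_pos hc ha, mul_pos hc hb, mul_pos (mul_pos hc ha) (sub_pos.2 hp1),
      mul_pos (mul_pos hc hb) (sub_pos.2 hp1), mul_lt_mul_of_pos_left hba hc]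
  constructor <;> rw [abs_of_pos key] <;>
    nlinarith [mul_pos (mul_pos hc ha) (sub_pos.2 hp1),
      mul_pos (mul_pos hc hb) (sub_pos.2 hp1), mul_lt_mul_of_pos_left hba hc]
end

section
/- Let $0 < p < 1$, $c > 0$, $k \geq 0$ and $m > 0$ be real numbers. In the infinite population limit, where the target guess is $T = c\, p^{k+1}$, the $(k+m)$-player's guess $c p^{k+m}$ is strictly closer to $T$ than the $k$-player's guess $c p^k$ if and only if $1 - 2p + p^m > 0$. -/
/-- In the infinite population limit with target `T = c * p^(k+1)`, the
`(k+m)`-player's guess is strictly closer to the target than the `k`-player's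
guess if and only if `1 - 2p + p^m > 0`. -/
theorem beauty_infinite_population_iff (p c k m : ℝ) (hp0 : 0 < p) (hp1 : p < 1)
    (hc : 0 < c) (hk : 0 ≤ k) (hm : 0 < m) :
    |c * p ^ (k + m) - c * p ^ (k + 1)| < |c * p ^ k - c * p ^ (k + 1)| ↔
      0 < 1 - 2 * p + p ^ m := by
  have hpk : (0:ℝ) < p ^ k := Real.rpow_pos_of_pos hp0 k
  have hpm1 : p ^ m < 1 := Real.rpow_lt_one hp0.le hp1 hm
  rw [Real.rpow_add hp0, Real.rpow_add hp0, Real.rpow_one]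
  have h1 : c * (p ^ k * p ^ m) - c * (p ^ k * p) = (c * p ^ k) * (p ^ m - p) := by ring
  have h2 : c * p ^ k - c * (p ^ k * p) = (c * p ^ k) * (1 - p) := by ring
  rw [h1, h2, abs_mul (c * p ^ k), abs_mul (c * p ^ k), abs_of_pos (mul_pos hc hpk),
    mul_lt_mul_iff_right₀ (mul_pos hc hpk),
    abs_of_pos (by linarith : (0:ℝ) < 1 - p), abs_lt]
  constructor
  · rintro ⟨h, _⟩; linarith
  · intro h; exact ⟨by linarith, by linarith⟩
end

section
/- Let $m > 2$ be real and let $\phi(p) = 1 - 2p + p^m$ for $p \in (0,1)$. Then there exists a unique $p^* \in (1/2, 1)$ such that $\phi(p^*) = 0$. -/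
open Set Filter Topology

/-- For real `m > 2`, `φ(p) = 1 - 2p + p^m` has a unique root in `(1/2, 1)`. -/
theorem phi_unique_root (m : ℝ) (hm : 2 < m) :
    ∃! p : ℝ, p ∈ Set.Ioo (1 / 2 : ℝ) 1 ∧ 1 - 2 * p + p ^ m = 0 := by
  have hm1 : (1:ℝ) < m := by linarith
  set f : ℝ → ℝ := fun p => 1 - 2 * p + p ^ m with hf
  have hf1 : f 1 = 0 := by norm_num [hf, Real.one_rpow]
  -- strict convexity
  have h2 : ConvexOn ℝ (Ici (0:ℝ)) (fun p : ℝ => 1 - 2 * p) := by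
    refine ⟨convex_Ici 0, fun x _ y _ a b ha hb hab => le_of_eq ?_⟩
    simp only [smul_eq_mul]
    nlinarith
  have hconv : StrictConvexOn ℝ (Ici (0:ℝ)) f :=
    h2.add_strictConvexOn (strictConvexOn_rpow hm1)
  -- uniqueness helper
  have key : ∀ a ∈ Ioo (1/2:ℝ) 1, f a = 0 → ∀ b ∈ Ioo (1/2:ℝ) 1, f b = 0 → a < b → False := by
    intro a ha hfa b hb hfb hab
    have ha1 : a < 1 := ha.2
    have hta : (0:ℝ) < 1 - a := by linarith
    have ht : (0:ℝ) < (1 - b) / (1 - a) := div_pos (by linarith [hb.2]) hta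
    have hs : (0:ℝ) < (b - a) / (1 - a) := div_pos (by linarith) hta
    have hts : (1 - b) / (1 - a) + (b - a) / (1 - a) = 1 := by field_simp; ring
    have hmem : b = ((1 - b) / (1 - a)) • a + ((b - a) / (1 - a)) • (1:ℝ) := by
      simp only [smul_eq_mul]
      field_simp
      ring
    have := hconv.2 (mem_Ici.2 (by linarith [ha.1] : (0:ℝ) ≤ a))
      (mem_Ici.2 zero_le_one) (by linarith : a ≠ 1) ht hs hts
    rw [← hmem, hfb, hfa, hf1] at this
    simp at this
  -- derivative at 1
  have hderiv : HasDerivAt f (m - 2) 1 := by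
    have d1 : HasDerivAt (fun p : ℝ => p ^ m) (m * (1:ℝ) ^ (m - 1)) 1 :=
      Real.hasDerivAt_rpow_const (Or.inl one_ne_zero)
    have d2 : HasDerivAt (fun p : ℝ => 1 - 2 * p) (-2) 1 := by
      exact ((hasDerivAt_const (1:ℝ) (1:ℝ)).sub ((hasDerivAt_id (1:ℝ)).const_mul (2:ℝ))).congr_deriv (by norm_num)
    have := d2.add d1
    have he : -2 + m * (1:ℝ) ^ (m - 1) = m - 2 := by rw [Real.one_rpow]; ring
    rw [he] at this
    exact this
  -- find x in (1/2,1) with f x < 0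
  have hslope : Tendsto (slope f 1) (𝓝[≠] 1) (𝓝 (m - 2)) :=
    hasDerivAt_iff_tendsto_slope.1 hderiv
  have hpos : ∀ᶠ x in 𝓝[≠] (1:ℝ), 0 < slope f 1 x :=
    hslope.eventually (eventually_gt_nhds (by linarith))
  have hIoo : Ioo (1/2:ℝ) 1 ∈ 𝓝[<] (1:ℝ) :=
    Ioo_mem_nhdsLT_of_mem (by constructor <;> norm_num)
  have hle : 𝓝[<] (1:ℝ) ≤ 𝓝[≠] (1:ℝ) :=
    nhdsWithin_mono 1 (fun x hx => ne_of_lt hx)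
  have hev : ∀ᶠ x in 𝓝[<] (1:ℝ), 0 < slope f 1 x ∧ x ∈ Ioo (1/2:ℝ) 1 :=
    (eventually_iff_exists_mem.2 ⟨_, hle hpos, fun x hx => hx⟩).and (eventually_iff_exists_mem.2 ⟨_, hIoo, fun x hx => hx⟩)
  obtain ⟨x, hx1, hx2⟩ := hev.exists
  have hfx : f x < 0 := by
    have hx1' : 0 < (f x - f 1) / (x - 1) := by rwa [slope_def_field] at hx1
    have hxlt : x - 1 < 0 := by linarith [hx2.2]
    rw [hf1, sub_zero] at hx1'
    rcases div_pos_iff.1 hx1' with ⟨_, h⟩ | ⟨h, _⟩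
    · linarith
    · exact h
  -- f(1/2) > 0
  have hfhalf : 0 < f (1/2 : ℝ) := by
    have : (0:ℝ) < (1/2:ℝ) ^ m := Real.rpow_pos_of_pos (by norm_num) m
    simp only [hf]
    nlinarith
  -- continuity
  have hcont : ContinuousOn f (Icc (1/2:ℝ) x) := by
    intro p hp
    have hp0 : p ≠ 0 := by have := hp.1; intro h; rw [h] at this; norm_num at this
    exact ((continuousAt_const.sub (continuousAt_const.mul continuousAt_id)).add
      (Real.continuousAt_rpow_const p m (Or.inl hp0))).continuousWithinAt
  -- IVT
  have hsub : Ioo (f x) (f (1/2:ℝ)) ⊆ f '' Ioo (1/2:ℝ) x :=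
    intermediate_value_Ioo' (le_of_lt hx2.1) hcont
  obtain ⟨p, hp, hfp⟩ := hsub ⟨hfx, hfhalf⟩
  have hpI : p ∈ Ioo (1/2:ℝ) 1 := ⟨hp.1, lt_trans hp.2 hx2.2⟩
  refine ⟨p, ⟨hpI, hfp⟩, ?_⟩
  intro q ⟨hqI, hq⟩
  by_contra hne
  rcases lt_or_gt_of_ne hne with h | h
  · exact key q hqI hq p hpI hfp h
  · exact key p hpI hfp q hqI hq h
end

section
/- Let $m > 2$ be real and set $p_{min} = (2/m)^{1/(m-1)}$. Then $\phi(p_{min}) = 1 - 2 p_{min} + p_{min}^m < 0$. -/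
/-- For real `m > 2`, the value of `φ` at its critical point
`p_min = (2/m)^(1/(m-1))` is negative. -/
theorem phi_at_p_min_neg (m : ℝ) (hm : 2 < m) :
    1 - 2 * ((2 / m) ^ (1 / (m - 1)) : ℝ) + ((2 / m) ^ (1 / (m - 1)) : ℝ) ^ m < 0 := by
  have hm0 : (0:ℝ) < m := by linarith
  have hm1 : (0:ℝ) < m - 1 := by linarith
  have hne : m - 1 ≠ 0 := ne_of_gt hm1
  set p : ℝ := (2 / m) ^ (1 / (m - 1)) with hp
  have hx : (0:ℝ) < 2 / m := by positivity
  have hp0 : 0 < p := Real.rpow_pos_of_pos hx _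
  have hpm1 : p ^ (m - 1) = 2 / m := by
    rw [hp, ← Real.rpow_mul hx.le, one_div, inv_mul_cancel₀ hne, Real.rpow_one]
  have hpm : p ^ m = (2 / m) * p := by
    have h : p ^ m = p ^ (m - 1) * p ^ (1:ℝ) := by
      rw [← Real.rpow_add hp0]; ring_nf
    rw [h, hpm1, Real.rpow_one]
  set q : ℝ := 2 * (m - 1) / m with hq
  have hq0 : 0 < q := by positivity
  have hb : 1 + (m - 1) * (q - 1) ≤ q ^ (m - 1) := by
    have := one_add_mul_self_le_rpow_one_add (s := q - 1) (by nlinarith) (p := m - 1) (by linarith)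
    simpa using this
  have hqm : m / 2 < q ^ (m - 1) := by
    have e : 1 + (m - 1) * (q - 1) = (m ^ 2 - 2 * m + 2) / m := by
      rw [hq]; field_simp; ring
    have h1 : m / 2 < (m ^ 2 - 2 * m + 2) / m := by
      rw [div_lt_div_iff₀ two_pos hm0]; nlinarith [sq_nonneg (m - 2)]
    linarith [e ▸ hb]
  have hkey : 1 / q < p := by
    have h1 : (1 / q) ^ (m - 1) < 2 / m := by
      rw [Real.div_rpow zero_le_one hq0.le, Real.one_rpow]
      rw [div_lt_div_iff₀ (Real.rpow_pos_of_pos hq0 _) hm0]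
      have := (div_lt_iff₀ (by norm_num : (0:ℝ) < 2)).mp hqm
      nlinarith [Real.rpow_pos_of_pos hq0 (m - 1)]
    have h2 := Real.rpow_lt_rpow (by positivity) h1 (by positivity : (0:ℝ) < 1 / (m - 1))
    rwa [← Real.rpow_mul (by positivity), mul_one_div, div_self hne, Real.rpow_one] at h2
  have hk : 1 < p * q := (div_lt_iff₀ hq0).mp hkey
  have hqm' : q * m = 2 * (m - 1) := by rw [hq]; field_simp
  have hk2 : m < 2 * p * (m - 1) := by
    have h := mul_lt_mul_of_pos_right hk hm0
    nlinarith [h, hqm', hp0]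
  rw [hpm]
  have h3 : 1 - 2 * p + 2 / m * p = (m - 2 * p * m + 2 * p) / m := by field_simp
  rw [h3]
  apply div_neg_of_neg_of_pos _ hm0
  nlinarith [hk2]
end

section
/- Let $N \geq 2$ be a real number. Then there exists $M > 0$ such that for every real $m \geq M$, the function $\phi_N(p) = 1 - 2p\,\frac{N + p^m}{N+1} + p^m$ has a root $p^*$ in the interval $(1/2, 1)$. -/
/-- For real `N ≥ 2`, there is `M > 0` such that for every `m ≥ M`, the
function `φ_N(p) = 1 - 2p(N + p^m)/(N+1) + p^m` has a root in `(1/2, 1)`. -/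
theorem phiN_root_exists_large_m (N : ℝ) (hN : 2 ≤ N) :
    ∃ M : ℝ, 0 < M ∧ ∀ m : ℝ, M ≤ m →
      ∃ pstar ∈ Set.Ioo (1 / 2 : ℝ) 1,
        1 - 2 * pstar * ((N + pstar ^ m) / (N + 1)) + pstar ^ m = 0 := by
  refine ⟨22, by norm_num, fun m hm => ?_⟩
  have hm0 : (0:ℝ) < m := by linarith
  have hN1 : (0:ℝ) < N + 1 := by linarith
  set f : ℝ → ℝ := fun p => 1 - 2 * p * ((N + p ^ m) / (N + 1)) + p ^ m with hf
  -- continuity on [1/2, 9/10]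
  have hcont : ContinuousOn f (Set.Icc (1/2 : ℝ) (9/10)) := by
    have hrpow : ContinuousOn (fun p : ℝ => p ^ m) (Set.Icc (1/2 : ℝ) (9/10)) := by
      apply ContinuousOn.rpow_const continuousOn_id
      intro x hx
      exact Or.inl (by have := hx.1; positivity)
    fun_prop (disch := intro x hx; positivity)
  -- f (1/2) > 0
  have ha0 : (0:ℝ) < (1/2 : ℝ) ^ m := Real.rpow_pos_of_pos (by norm_num) m
  have ha1 : (1/2 : ℝ) ^ m < 1 := Real.rpow_lt_one (by norm_num) (by norm_num) hm0
  have hfa : 0 < f (1/2) := by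
    have heq : f (1/2) = (1 + ((1/2:ℝ) ^ m) * N) / (N + 1) := by
      simp only [hf]
      field_simp
      ring
    rw [heq]
    have : 0 < 1 + ((1/2:ℝ) ^ m) * N := by nlinarith
    positivity
  -- f (9/10) < 0
  have hb0 : (0:ℝ) < (9/10 : ℝ) ^ m := Real.rpow_pos_of_pos (by norm_num) m
  have hb1 : (9/10 : ℝ) ^ m ≤ 1/10 := by
    have h1 : (9/10 : ℝ) ^ m ≤ (9/10 : ℝ) ^ (22:ℝ) :=
      Real.rpow_le_rpow_of_exponent_ge (by norm_num) (by norm_num) hm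
    have h2 : (9/10 : ℝ) ^ (22:ℝ) = (9/10 : ℝ) ^ (22:ℕ) := by
      rw [← Real.rpow_natCast]; norm_num
    have h3 : ((9:ℝ)/10) ^ (22:ℕ) ≤ 1/10 := by norm_num
    linarith [h1, h2 ▸ h1]
  have hfb : f (9/10) < 0 := by
    set b := (9/10 : ℝ) ^ m with hb
    have heq : f (9/10) = ((N+1)*(1+b) - (9/5)*(N+b)) / (N + 1) := by
      simp only [hf]
      field_simp
      ring
    rw [heq]
    apply div_neg_of_neg_of_pos _ hN1
    nlinarith [mul_le_mul_of_nonneg_left hb1 (show (0:ℝ) ≤ N - 4/5 by linarith)]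
  -- IVT
  have hsub : Set.Ioo (f (9/10)) (f (1/2)) ⊆ f '' Set.Ioo (1/2 : ℝ) (9/10) :=
    intermediate_value_Ioo' (by norm_num) hcont
  obtain ⟨p, hp, hfp⟩ := hsub ⟨hfb, hfa⟩
  exact ⟨p, ⟨hp.1, lt_trans hp.2 (by norm_num)⟩, hfp⟩
end
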